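/- Fix q > 0, q ≠ 1 and a probability mass function p on ℕ. Define P(G = j) = q^j ∑_{m=j}^∞ p(m)/[m+1]_q. Then for every integer K ≤ 0 and integer x ≥ K: P(G ≥ -K) + P(G = -K)·(1 - q^{K - x})/(q - 1) = ∑_{m=-K}^∞ p(m) · (q^{m+1} - q^{-x})/(q^{m+1} - 1). -/

import Mathlib

/-- The `q`-integer `[n]_q = 1 + q + ... + q^{n-1}`. -/
noncomputable def qint (q : ℝ) (n : ℕ) : ℝ := ∑ i ∈ Finset.range n, q ^ i

/-- The marginal law of `G`: `P(G = j) = q^j ∑_{m ≥ j} p m/[m+1]_q`. -/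
noncomputable def Glaw (q : ℝ) (p : ℕ → ℝ) (j : ℕ) : ℝ :=
  q ^ j * ∑' m : ℕ, if j ≤ m then p m / qint q (m + 1) else 0

/-- Fix `q > 0`, `q ≠ 1`, a pmf `p` on `ℕ`, and let `G` have law
`P(G = j) = q^j ∑_{m ≥ j} p m/[m+1]_q`.  Then for every integer `K ≤ 0` and `x ≥ K`:
`P(G ≥ -K) + P(G = -K)(1 - q^{K-x})/(q-1) = ∑_{m ≥ -K} p m (q^{m+1} - q^{-x})/(q^{m+1}-1)`. -/
theorem Glaw_pitman_identity (q : ℝ) (hq0 : 0 < q) (hq1 : q ≠ 1)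
    (p : ℕ → ℝ) (hp0 : ∀ n, 0 ≤ p n) (hp1 : HasSum p 1)
    (K : ℤ) (hK : K ≤ 0) (x : ℤ) (hx : K ≤ x) :
    (∑' j : ℕ, if -K ≤ (j : ℤ) then Glaw q p j else 0)
      + Glaw q p (-K).toNat * (1 - q ^ (K - x)) / (q - 1)
      = ∑' m : ℕ,
          if -K ≤ (m : ℤ) then p m * (q ^ (m + 1) - q ^ (-x)) / (q ^ (m + 1) - 1)
          else 0 := by
  classical
  have hq0' : q ≠ 0 := ne_of_gt hq0
  have hq1' : q - 1 ≠ 0 := sub_ne_zero.2 hq1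
  set k : ℕ := (-K).toNat with hkdef
  have hkK : ((k : ℤ)) = -K := Int.toNat_of_nonneg (by omega)
  have hcond : ∀ n : ℕ, (-K ≤ (n : ℤ)) ↔ k ≤ n := by
    intro n; rw [← hkK]; exact_mod_cast Iff.rfl
  -- basic facts about qint
  have hqint1 : ∀ m : ℕ, (1 : ℝ) ≤ qint q (m + 1) := by
    intro m
    have h := Finset.single_le_sum (f := fun i => q ^ i)
      (fun i _ => (pow_pos hq0 i).le) (Finset.mem_range.2 (Nat.succ_pos m))
    simpa [qint] using h
  have hqintne : ∀ m : ℕ, qint q (m + 1) ≠ 0 := fun m =>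
    ne_of_gt (lt_of_lt_of_le one_pos (hqint1 m))
  have hqint_eq : ∀ n : ℕ, qint q n = (q ^ n - 1) / (q - 1) := fun n =>
    geom_sum_eq hq1 n
  -- powers of q minus one are nonzero
  have hpowne : ∀ m : ℕ, q ^ (m + 1) - 1 ≠ 0 := by
    intro m h
    apply hqintne m
    rw [hqint_eq, h, zero_div]
  -- the summand
  set a : ℕ → ℝ := fun m => p m / qint q (m + 1) with hadef
  have ha0 : ∀ m, 0 ≤ a m := fun m =>
    div_nonneg (hp0 m) (le_trans zero_le_one (hqint1 m))
  have hale : ∀ m, a m ≤ p m := fun m => div_le_self (hp0 m) (hqint1 m)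
  have hsa : Summable a := hp1.summable.of_nonneg_of_le ha0 hale
  have hS : ∀ j : ℕ, Summable (fun m => if j ≤ m then a m else 0) := by
    intro j
    refine hp1.summable.of_nonneg_of_le (fun m => ?_) (fun m => ?_) <;> split
    · exact ha0 m
    · exact le_rfl
    · exact hale m
    · exact hp0 m
  -- unfold Glaw in the goal
  simp only [Glaw, ← hadef]
  -- the double-sum kernel
  set F : ℕ → ℕ → ℝ := fun m j => if k ≤ j ∧ j ≤ m then q ^ j * a m else 0
    with hFdef
  have hF0 : ∀ m j, 0 ≤ F m j := by
    intro m j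
    simp only [hFdef]
    split
    · exact mul_nonneg (pow_pos hq0 j).le (ha0 m)
    · exact le_rfl
  have hFzero : ∀ m : ℕ, ∀ j ∉ Finset.Icc k m, F m j = 0 := by
    intro m j hj
    simp only [Finset.mem_Icc] at hj
    simp only [hFdef, if_neg hj]
  have hrowF_summable : ∀ m, Summable (F m) := fun m =>
    summable_of_ne_finset_zero (hFzero m)
  have hrow : ∀ m : ℕ, ∑' j, F m j = (∑ j ∈ Finset.Icc k m, q ^ j) * a m := by
    intro m
    rw [tsum_eq_sum (hFzero m), Finset.sum_mul]
    refine Finset.sum_congr rfl fun j hj => ?_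
    simp only [Finset.mem_Icc] at hj
    simp only [hFdef, if_pos hj]
  have hcol_summable : ∀ j, Summable (fun m => F m j) := by
    intro j
    refine (hsa.mul_left (q ^ j)).of_nonneg_of_le (fun m => hF0 m j)
      (fun m => ?_)
    simp only [hFdef]
    split
    · exact le_rfl
    · exact mul_nonneg (pow_pos hq0 j).le (ha0 m)
  have hrow_le : ∀ m, (∑ j ∈ Finset.Icc k m, q ^ j) * a m ≤ p m := by
    intro m
    have h1 : (∑ j ∈ Finset.Icc k m, q ^ j) ≤ qint q (m + 1) := by
      rw [qint]
      refine Finset.sum_le_sum_of_subset_of_nonneg ?_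
        (fun i _ _ => (pow_pos hq0 i).le)
      intro j hj
      simp only [Finset.mem_Icc] at hj
      exact Finset.mem_range.2 (Nat.lt_succ_of_le hj.2)
    calc (∑ j ∈ Finset.Icc k m, q ^ j) * a m
        ≤ qint q (m + 1) * a m :=
          mul_le_mul_of_nonneg_right h1 (ha0 m)
      _ = p m := by
          simp only [hadef]
          rw [mul_comm, div_mul_cancel₀ _ (hqintne m)]
  have hg_summable : Summable (fun m => ∑' j, F m j) := by
    refine hp1.summable.of_nonneg_of_le
      (fun m => tsum_nonneg (fun j => hF0 m j)) (fun m => ?_)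
    rw [hrow m]; exact hrow_le m
  have hFunc : Summable (Function.uncurry F) :=
    (summable_prod_of_nonneg (fun u => hF0 u.1 u.2)).2
      ⟨hrowF_summable, hg_summable⟩
  have hswap : ∑' (j) (m), F m j = ∑' (m) (j), F m j :=
    Summable.tsum_comm' hFunc hrowF_summable hcol_summable
  have hcol : ∀ j : ℕ,
      (if -K ≤ (j : ℤ) then q ^ j * ∑' m, (if j ≤ m then a m else 0) else 0)
        = ∑' m, F m j := by
    intro j
    simp only [hcond j]
    by_cases hj : k ≤ j
    · rw [if_pos hj, ← tsum_mul_left]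
      refine tsum_congr fun m => ?_
      simp only [hFdef, hj, true_and, mul_ite, mul_zero]
    · rw [if_neg hj]
      symm
      simp only [hFdef, hj, false_and, if_false]
      exact tsum_zero
  -- the constant for the second term
  set c : ℝ := q ^ k * (1 - q ^ (K - x)) / (q - 1) with hcdef
  have hz : (q : ℝ) ^ (k : ℕ) * q ^ (K - x) = q ^ (-x) := by
    rw [← zpow_natCast q k, ← zpow_add₀ hq0']
    congr 1
    omega
  have hc : c = (q ^ k - q ^ (-x)) / (q - 1) := by
    rw [hcdef, mul_sub, mul_one, hz]
  -- rewrite the second term of the LHS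
  have hterm2 :
      (q ^ k * ∑' m, (if k ≤ m then a m else 0)) * (1 - q ^ (K - x)) / (q - 1)
        = ∑' m, (if k ≤ m then a m else 0) * c := by
    rw [tsum_mul_right, hcdef]
    ring
  calc (∑' j : ℕ, if -K ≤ (j : ℤ) then
          q ^ j * ∑' m, (if j ≤ m then a m else 0) else 0)
        + (q ^ k * ∑' m, (if k ≤ m then a m else 0)) * (1 - q ^ (K - x)) / (q - 1)
      = (∑' (m) (j), F m j) + ∑' m, (if k ≤ m then a m else 0) * c := by
        rw [← hswap, hterm2]
        congr 1
        exact tsum_congr hcol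
    _ = ∑' m, ((∑' j, F m j) + (if k ≤ m then a m else 0) * c) :=
        (Summable.tsum_add hg_summable ((hS k).mul_right c)).symm
    _ = ∑' m : ℕ, (if -K ≤ (m : ℤ) then
          p m * (q ^ (m + 1) - q ^ (-x)) / (q ^ (m + 1) - 1) else 0) := by
        refine tsum_congr fun m => ?_
        rw [hrow m]
        simp only [hcond m]
        by_cases hm : k ≤ m
        · rw [if_pos hm, if_pos hm]
          have hsum : (∑ j ∈ Finset.Icc k m, q ^ j)
              = (q ^ (m + 1) - 1) / (q - 1) - (q ^ k - 1) / (q - 1) := by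
            rw [← Finset.Ico_add_one_right_eq_Icc,
              Finset.sum_Ico_eq_sub _ (by omega : k ≤ m + 1),
              geom_sum_eq hq1, geom_sum_eq hq1]
          rw [hsum, hc, hadef]
          simp only
          rw [hqint_eq]
          have h1 := hpowne m
          have h2 := hq1'
          field_simp
          ring
        · rw [if_neg hm, if_neg hm,
            Finset.Icc_eq_empty (by omega : ¬ k ≤ m), Finset.sum_empty,
            zero_mul, zero_mul, add_zero]
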